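/- For every $q < 1$ and every $M > 0$, there exists a function $u \in BV(\mathbb{R}^d)$ ($d \geq 2$) of the form $u = \sum_{i=1}^N h_i \chi_{B(0,r_i)}$ such that $\|u\|_{L^{d/(d-1),q}(\mathbb{R}^d)} > M \cdot |Du|(\mathbb{R}^d)$. In particular, the Gagliardo–Nirenberg–Sobolev inequality $\|u\|_{L^{d/(d-1),q}} \leq C |Du|(\mathbb{R}^d)$ fails for every exponent $q < 1$ on the Lorentz scale. -/

import Mathlib

open MeasureTheory Metric Set
open Filter

/-- The Lorentz quasinorm `‖u‖_{L^{p,q}} = (p ∫_0^∞ (t |{|u| > t}|^{1/p})^q dt/t)^{1/q}`. -/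
noncomputable def lorentzQuasinorm (d : ℕ) (p q : ℝ)
    (u : EuclideanSpace ℝ (Fin d) → ℝ) : ℝ :=
  (p * ∫ t in Set.Ioi (0:ℝ),
    (t * (volume {x : EuclideanSpace ℝ (Fin d) | t < |u x|}).toReal ^ (1/p)) ^ q / t) ^ (1/q)

lemma aux_uval {E : Type*} [NormedAddCommGroup E] (N : ℕ) (r : ℕ → ℝ) (hr : StrictAnti r)
    (x : E) (k : ℕ) (hk : k < N) (t : ℝ) (hkt : (k:ℝ) < t) (htk : t < (k:ℝ)+1) :
    (t < |∑ i ∈ Finset.range N, (ball (0:E) (r (i+1))).indicator (1 : E → ℝ) x|)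
      ↔ x ∈ ball (0:E) (r (k+1)) := by
  have hnonneg : ∀ i, (0:ℝ) ≤ (ball (0:E) (r (i+1))).indicator (1 : E → ℝ) x := by
    intro i; exact Set.indicator_nonneg (fun _ _ => zero_le_one) x
  have habs : |∑ i ∈ Finset.range N, (ball (0:E) (r (i+1))).indicator (1 : E → ℝ) x|
      = ∑ i ∈ Finset.range N, (ball (0:E) (r (i+1))).indicator (1 : E → ℝ) x :=
    abs_of_nonneg (Finset.sum_nonneg fun i _ => hnonneg i)
  rw [habs]
  constructor
  · intro ht
    by_contra hx
    have hle : ∑ i ∈ Finset.range N, (ball (0:E) (r (i+1))).indicator (1 : E → ℝ) x ≤ (k:ℝ) := by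
      calc ∑ i ∈ Finset.range N, (ball (0:E) (r (i+1))).indicator (1 : E → ℝ) x
          ≤ ∑ i ∈ Finset.range N, (if i ∈ Finset.range k then (1:ℝ) else 0) := by
            apply Finset.sum_le_sum
            intro i _
            by_cases hik : i ∈ Finset.range k
            · simp only [hik, if_true]
              exact Set.indicator_le' (fun _ _ => le_refl _) (fun _ _ => zero_le_one) x
            · simp only [hik, if_false]
              have hnm : x ∉ ball (0:E) (r (i+1)) := by
                intro hmem
                apply hx
                have hle' : r (i+1) ≤ r (k+1) := by
                  apply hr.antitone
                  simp only [Finset.mem_range, not_lt] at hik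
                  omega
                exact mem_ball.2 (lt_of_lt_of_le (mem_ball.1 hmem) hle')
              simp [Set.indicator_of_notMem hnm]
        _ = ∑ i ∈ Finset.range N ∩ Finset.range k, (1:ℝ) := Finset.sum_ite_mem _ _ _
        _ = (k:ℝ) := by
            have : Finset.range N ∩ Finset.range k = Finset.range k := by
              apply Finset.inter_eq_right.2
              exact Finset.range_subset_range.2 (le_of_lt hk)
            rw [this]
            simp
    linarith
  · intro hx
    have hge : (k:ℝ)+1 ≤ ∑ i ∈ Finset.range N, (ball (0:E) (r (i+1))).indicator (1 : E → ℝ) x := by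
      calc ((k:ℝ)+1) = ∑ _i ∈ Finset.range (k+1), (1:ℝ) := by simp
        _ = ∑ i ∈ Finset.range (k+1), (ball (0:E) (r (i+1))).indicator (1 : E → ℝ) x := by
            apply Finset.sum_congr rfl
            intro i hi
            have hik : i + 1 ≤ k + 1 := by
              have := Finset.mem_range.1 hi; omega
            have hle' : r (k+1) ≤ r (i+1) := hr.antitone hik
            have hmem : x ∈ ball (0:E) (r (i+1)) :=
              mem_ball.2 (lt_of_lt_of_le (mem_ball.1 hx) hle')
            exact (Set.indicator_of_mem hmem (1 : E → ℝ)).symm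
        _ ≤ ∑ i ∈ Finset.range N, (ball (0:E) (r (i+1))).indicator (1 : E → ℝ) x := by
            apply Finset.sum_le_sum_of_subset_of_nonneg (Finset.range_subset_range.2 hk)
            intro i _ _; exact hnonneg i
    linarith

lemma aux_ubound {E : Type*} [NormedAddCommGroup E] (N : ℕ) (r : ℕ → ℝ) (x : E) :
    |∑ i ∈ Finset.range N, (ball (0:E) (r (i+1))).indicator (1 : E → ℝ) x| ≤ (N:ℝ) := by
  have hnonneg : ∀ i, (0:ℝ) ≤ (ball (0:E) (r (i+1))).indicator (1 : E → ℝ) x := by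
    intro i; exact Set.indicator_nonneg (fun _ _ => zero_le_one) x
  rw [abs_of_nonneg (Finset.sum_nonneg fun i _ => hnonneg i)]
  calc ∑ i ∈ Finset.range N, (ball (0:E) (r (i+1))).indicator (1 : E → ℝ) x
      ≤ ∑ _i ∈ Finset.range N, (1:ℝ) := by
        apply Finset.sum_le_sum
        intro i _
        exact Set.indicator_le' (fun _ _ => le_refl _) (fun _ _ => zero_le_one) x
    _ = (N:ℝ) := by simp

noncomputable def auxR (c : ℝ) (i : ℕ) : ℝ := ((i:ℝ)+1) ^ c

lemma auxR_succ (c : ℝ) (k : ℕ) : auxR c (k+1) = ((k:ℝ)+2) ^ c := by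
  unfold auxR; congr 1; push_cast; ring

lemma auxR_pos (c : ℝ) (i : ℕ) : 0 < auxR c i := Real.rpow_pos_of_pos (by positivity) c

lemma auxR_strictAnti {c : ℝ} (hc : c < 0) : StrictAnti (auxR c) := by
  intro i j hij
  exact Real.rpow_lt_rpow_of_neg (by positivity) (by push_cast; exact_mod_cast (by omega : i+1 < j+1)) hc

lemma exists_harmonic_ge (T : ℝ) : ∃ N : ℕ, T ≤ ∑ i ∈ Finset.range N, ((i:ℝ)+2)⁻¹ := by
  have h1 : Tendsto (fun n : ℕ => ∑ i ∈ Finset.range n, ((i:ℝ)+2)⁻¹) atTop atTop := by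
    have h2 : Tendsto (fun n : ℕ => (∑ i ∈ Finset.range (n+1), (1 / (i + 1) : ℝ)) - 1) atTop atTop := by
      apply tendsto_atTop_add_const_right
      exact Real.tendsto_sum_range_one_div_nat_succ_atTop.comp (tendsto_add_atTop_nat 1)
    refine h2.congr (fun n => ?_)
    rw [Finset.sum_range_succ' (fun i => (1 / (i + 1) : ℝ)) n]
    have he : ∀ i ∈ Finset.range n, (1 / ((i+1:ℕ) + 1) : ℝ) = ((i:ℝ)+2)⁻¹ := by
      intro i _; rw [one_div]; push_cast; ring_nf
    rw [Finset.sum_congr rfl he]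
    norm_num
  exact (h1.eventually_ge_atTop T).exists

/-- for every `0 < q < 1` and every `M > 0` there is a finite sum of indicators of
nested balls `u = ∑_{i=1}^N h_i χ_{B(0,r_i)}` with
`‖u‖_{L^{d/(d-1),q}} > M |Du|(ℝ^d)`, where `|Du|(ℝ^d) = ∑ h_i (d ω_d) r_i^{d-1}` is the total
variation of `u`. Hence the Gagliardo–Nirenberg–Sobolev inequality fails on the Lorentz scale for
every second exponent `q < 1`. -/
theorem lorentz_sobolev_fails_for_q_lt_one (d : ℕ) (hd : 2 ≤ d) (q : ℝ) (hq0 : 0 < q)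
    (hq1 : q < 1) (M : ℝ) (hM : 0 < M) :
    ∃ (N : ℕ) (h r : ℕ → ℝ), (∀ i, 0 < h i) ∧ (∀ i, 0 < r i) ∧ StrictAnti r ∧
      lorentzQuasinorm d ((d:ℝ)/((d:ℝ)-1)) q
          (fun x => ∑ i ∈ Finset.range N,
            h (i+1) * (ball (0:EuclideanSpace ℝ (Fin d)) (r (i+1))).indicator 1 x) >
        M * ∑ i ∈ Finset.range N,
          h (i+1) * ((d:ℝ) * (volume (ball (0:EuclideanSpace ℝ (Fin d)) 1)).toReal) *
            (r (i+1)) ^ ((d:ℝ) - 1) := by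
  classical
  have hd1 : (1:ℝ) < (d:ℝ) := by exact_mod_cast lt_of_lt_of_le one_lt_two hd
  have hd0 : (0:ℝ) < (d:ℝ) - 1 := by linarith
  set p : ℝ := (d:ℝ)/((d:ℝ)-1) with hpdef
  have hppos : 0 < p := div_pos (by linarith) hd0
  set e : ℝ := -(((d:ℝ)-1)⁻¹) with hedef
  have heneg : e < 0 := neg_neg_of_pos (inv_pos.2 hd0)
  set ω : ℝ := (volume (ball (0:EuclideanSpace ℝ (Fin d)) 1)).toReal with hωdef
  have hωpos : 0 < ω :=
    ENNReal.toReal_pos (measure_ball_pos volume 0 one_pos).ne' measure_ball_lt_top.ne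
  set β : ℝ := ω ^ (1/p) with hβdef
  have hβpos : 0 < β := Real.rpow_pos_of_pos hωpos _
  set A : ℝ := p * β ^ q with hAdef
  have hApos : 0 < A := mul_pos hppos (Real.rpow_pos_of_pos hβpos q)
  set B : ℝ := M * ((d:ℝ) * ω) with hBdef
  have hBpos : 0 < B := mul_pos hM (mul_pos (by positivity) hωpos)
  set ε : ℝ := 1/q - 1 with hεdef
  have hεpos : 0 < ε := sub_pos.2 ((one_lt_div hq0).2 hq1)
  obtain ⟨N, hNT⟩ := exists_harmonic_ge (max 1 ((B / A ^ (1/q)) ^ ε⁻¹ + 1))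
  set S : ℝ := ∑ i ∈ Finset.range N, ((i:ℝ)+2)⁻¹ with hSdef
  have hS1 : (1:ℝ) ≤ S := le_trans (le_max_left _ _) hNT
  have hS0 : (0:ℝ) < S := lt_of_lt_of_le one_pos hS1
  refine ⟨N, fun _ => 1, auxR e, fun _ => one_pos, auxR_pos e, auxR_strictAnti heneg, ?_⟩
  simp only [one_mul]
  set u : EuclideanSpace ℝ (Fin d) → ℝ :=
    fun x => ∑ i ∈ Finset.range N,
      (ball (0:EuclideanSpace ℝ (Fin d)) (auxR e (i+1))).indicator 1 x with hudef
  have husum : ∀ x, u x = ∑ i ∈ Finset.range N,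
      (ball (0:EuclideanSpace ℝ (Fin d)) (auxR e (i+1))).indicator
        (1 : EuclideanSpace ℝ (Fin d) → ℝ) x := fun x => rfl
  have hball : ∀ k : ℕ, k < N → ∀ t : ℝ, (k:ℝ) < t → t < (k:ℝ)+1 →
      {x : EuclideanSpace ℝ (Fin d) | t < |u x|} = ball 0 (auxR e (k+1)) := by
    intro k hk t hkt htk
    ext x
    rw [mem_setOf_eq, husum x]
    exact aux_uval N (auxR e) (auxR_strictAnti heneg) x k hk t hkt htk
  have hempty : ∀ t : ℝ, (N:ℝ) ≤ t → {x : EuclideanSpace ℝ (Fin d) | t < |u x|} = ∅ := by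
    intro t hNt
    ext x
    simp only [mem_setOf_eq, mem_empty_iff_false, iff_false, not_lt]
    rw [husum x]
    exact le_trans (aux_ubound N (auxR e) x) hNt
  have h2pos : ∀ k : ℕ, (0:ℝ) < (k:ℝ)+2 := fun k => by positivity
  have hvol : ∀ k : ℕ,
      (volume (ball (0:EuclideanSpace ℝ (Fin d)) (auxR e (k+1)))).toReal
        = ((k:ℝ)+2) ^ (-p) * ω := by
    intro k
    haveI : Nonempty (Fin d) := ⟨⟨0, by omega⟩⟩
    haveI : Nontrivial (EuclideanSpace ℝ (Fin d)) := inferInstance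
    rw [Measure.addHaar_ball _ _ (auxR_pos e (k+1)).le, finrank_euclideanSpace_fin,
      ENNReal.toReal_mul, ENNReal.toReal_ofReal (pow_nonneg (auxR_pos e (k+1)).le d), ← hωdef]
    congr 1
    rw [auxR_succ, ← Real.rpow_natCast ((((k:ℝ)+2)) ^ e) d, ← Real.rpow_mul (h2pos k).le]
    congr 1
    rw [hedef, hpdef]
    field_simp
  have hFval : ∀ k : ℕ, k < N → ∀ t : ℝ, 0 < t → (k:ℝ) < t → t < (k:ℝ)+1 →
      (t * (volume {x : EuclideanSpace ℝ (Fin d) | t < |u x|}).toReal ^ (1/p)) ^ q / t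
        = (β ^ q * ((k:ℝ)+2) ^ (-q)) * t ^ (q-1) := by
    intro k hk t ht0 hkt htk
    rw [hball k hk t hkt htk, hvol k]
    have e1 : ((((k:ℝ)+2) ^ (-p)) * ω) ^ (1/p) = ((k:ℝ)+2) ^ (-(1:ℝ)) * β := by
      rw [Real.mul_rpow (Real.rpow_nonneg (h2pos k).le _) hωpos.le, hβdef]
      congr 1
      rw [← Real.rpow_mul (h2pos k).le]
      congr 1
      field_simp
    rw [e1, show t * (((k:ℝ)+2) ^ (-(1:ℝ)) * β) = ((k:ℝ)+2) ^ (-(1:ℝ)) * β * t by ring,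
      Real.mul_rpow (mul_nonneg (Real.rpow_nonneg (h2pos k).le _) hβpos.le) ht0.le,
      Real.mul_rpow (Real.rpow_nonneg (h2pos k).le _) hβpos.le,
      ← Real.rpow_mul (h2pos k).le, show (-(1:ℝ)) * q = -q by ring,
      Real.rpow_sub ht0, Real.rpow_one]
    ring
  have hae : (fun t => (t * (volume
        {x : EuclideanSpace ℝ (Fin d) | t < |u x|}).toReal ^ (1/p)) ^ q / t)
      =ᵐ[volume.restrict (Ioi (0:ℝ))]
      (fun t => ∑ k ∈ Finset.range N,
        (Ioo ((k:ℝ)) ((k:ℝ)+1)).indicator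
          (fun s => (β ^ q * ((k:ℝ)+2) ^ (-q)) * s ^ (q-1)) t) := by
    have hcnt : volume (Set.range ((↑·) : ℕ → ℝ)) = 0 :=
      Set.Countable.measure_zero (Set.countable_range _) _
    have hae0 : ∀ᵐ t ∂(volume.restrict (Ioi (0:ℝ))), t ∉ Set.range ((↑·) : ℕ → ℝ) :=
      ae_restrict_of_ae (measure_eq_zero_iff_ae_notMem.mp hcnt)
    filter_upwards [hae0, ae_restrict_mem measurableSet_Ioi] with t hnot ht'
    have ht0 : (0:ℝ) < t := ht'
    rcases lt_or_ge t (N:ℝ) with h | h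
    · have hk_le : ((⌊t⌋₊:ℝ)) ≤ t := Nat.floor_le ht0.le
      have hk_lt : ((⌊t⌋₊:ℝ)) < t := lt_of_le_of_ne hk_le (fun heq => hnot (Set.mem_range.2 ⟨⌊t⌋₊, heq⟩))
      have hk1 : t < ((⌊t⌋₊:ℝ))+1 := Nat.lt_floor_add_one t
      have hkN : ⌊t⌋₊ < N := (Nat.floor_lt ht0.le).2 h
      rw [hFval ⌊t⌋₊ hkN t ht0 hk_lt hk1]
      rw [Finset.sum_eq_single_of_mem ⌊t⌋₊ (Finset.mem_range.2 hkN)]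
      · rw [Set.indicator_of_mem (Set.mem_Ioo.2 ⟨hk_lt, hk1⟩)]
      · intro j hj hjk
        apply Set.indicator_of_notMem
        intro hmem
        apply hjk
        have hfl : ⌊t⌋₊ = j := by
          rw [Nat.floor_eq_iff ht0.le]
          exact ⟨hmem.1.le, by push_cast; exact hmem.2⟩
        omega
    · rw [hempty t h]
      simp only [measure_empty, ENNReal.toReal_zero]
      rw [Real.zero_rpow (one_div_ne_zero hppos.ne'), mul_zero, Real.zero_rpow hq0.ne',
        zero_div]
      symm
      apply Finset.sum_eq_zero
      intro k hk
      apply Set.indicator_of_notMem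
      intro hmem
      have hk1N : (k:ℝ)+1 ≤ (N:ℝ) := by
        have hkN := Finset.mem_range.1 hk
        exact_mod_cast Nat.succ_le_of_lt hkN
      linarith [hmem.2]
  have hint : ∀ k : ℕ, IntegrableOn (fun s : ℝ => (β ^ q * ((k:ℝ)+2) ^ (-q)) * s ^ (q-1))
      (Ioo ((k:ℝ)) ((k:ℝ)+1)) volume := by
    intro k
    have h1 : IntervalIntegrable (fun s : ℝ => s ^ (q-1)) volume (k:ℝ) ((k:ℝ)+1) :=
      intervalIntegral.intervalIntegrable_rpow' (by linarith)
    have h2 := (intervalIntegrable_iff_integrableOn_Ioc_of_le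
      (by linarith : (k:ℝ) ≤ (k:ℝ)+1)).1 h1
    exact (h2.mono_set Ioo_subset_Ioc_self).const_mul _
  have hGint : ∀ k ∈ Finset.range N,
      Integrable (fun t => (Ioo ((k:ℝ)) ((k:ℝ)+1)).indicator
        (fun s => (β ^ q * ((k:ℝ)+2) ^ (-q)) * s ^ (q-1)) t) (volume.restrict (Ioi (0:ℝ))) :=
    fun k _ => ((hint k).integrable_indicator measurableSet_Ioo).restrict
  have hblock : ∀ k ∈ Finset.range N,
      β ^ q * ((k:ℝ)+2)⁻¹ ≤ ∫ t in Ioi (0:ℝ), (Ioo ((k:ℝ)) ((k:ℝ)+1)).indicator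
        (fun s => (β ^ q * ((k:ℝ)+2) ^ (-q)) * s ^ (q-1)) t := by
    intro k _
    have hsub : Ioo ((k:ℝ)) ((k:ℝ)+1) ⊆ Ioi (0:ℝ) :=
      fun s hs => lt_of_le_of_lt (Nat.cast_nonneg k) hs.1
    rw [setIntegral_indicator measurableSet_Ioo, Set.inter_eq_self_of_subset_right hsub]
    have hμ : volume (Ioo ((k:ℝ)) ((k:ℝ)+1)) = 1 := by
      rw [Real.volume_Ioo]; simp
    have hpt : ∀ s ∈ Ioo ((k:ℝ)) ((k:ℝ)+1),
        β ^ q * ((k:ℝ)+2)⁻¹ ≤ (β ^ q * ((k:ℝ)+2) ^ (-q)) * s ^ (q-1) := by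
      intro s hs
      have hs0 : (0:ℝ) < s := lt_of_le_of_lt (Nat.cast_nonneg k) hs.1
      have h3 : s ≤ (k:ℝ)+2 := by linarith [hs.2]
      have h4 : ((k:ℝ)+2) ^ (q-1) ≤ s ^ (q-1) :=
        Real.rpow_le_rpow_of_nonpos hs0 h3 (by linarith)
      calc β ^ q * ((k:ℝ)+2)⁻¹
          = (β ^ q * ((k:ℝ)+2) ^ (-q)) * ((k:ℝ)+2) ^ (q-1) := by
            rw [mul_assoc, ← Real.rpow_add (h2pos k), show -q + (q-1) = -1 by ring,
              Real.rpow_neg_one]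
        _ ≤ (β ^ q * ((k:ℝ)+2) ^ (-q)) * s ^ (q-1) := by
            apply mul_le_mul_of_nonneg_left h4
            exact mul_nonneg (Real.rpow_nonneg hβpos.le _) (Real.rpow_nonneg (h2pos k).le _)
    have hge := setIntegral_ge_of_const_le measurableSet_Ioo
      (by rw [hμ]; exact ENNReal.one_ne_top) hpt (hint k)
    rwa [Measure.real, hμ, ENNReal.toReal_one, one_smul] at hge
  have hIG : β ^ q * S ≤ ∫ t in Ioi (0:ℝ), ∑ k ∈ Finset.range N,
      (Ioo ((k:ℝ)) ((k:ℝ)+1)).indicator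
        (fun s => (β ^ q * ((k:ℝ)+2) ^ (-q)) * s ^ (q-1)) t := by
    rw [integral_finset_sum _ hGint]
    calc β ^ q * S = ∑ k ∈ Finset.range N, β ^ q * ((k:ℝ)+2)⁻¹ := by
          rw [hSdef, Finset.mul_sum]
      _ ≤ _ := Finset.sum_le_sum hblock
  have hFG : (∫ t in Ioi (0:ℝ),
        (t * (volume {x : EuclideanSpace ℝ (Fin d) | t < |u x|}).toReal ^ (1/p)) ^ q / t)
      = ∫ t in Ioi (0:ℝ), ∑ k ∈ Finset.range N,
        (Ioo ((k:ℝ)) ((k:ℝ)+1)).indicator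
          (fun s => (β ^ q * ((k:ℝ)+2) ^ (-q)) * s ^ (q-1)) t :=
    integral_congr_ae hae
  have hkey : A * S ≤ p * ∫ t in Ioi (0:ℝ),
      (t * (volume {x : EuclideanSpace ℝ (Fin d) | t < |u x|}).toReal ^ (1/p)) ^ q / t := by
    rw [hFG, hAdef, mul_assoc]
    exact mul_le_mul_of_nonneg_left hIG hppos.le
  have hsum : ∑ i ∈ Finset.range N, ((d:ℝ) * ω) * (auxR e (i+1)) ^ ((d:ℝ)-1)
      = ((d:ℝ) * ω) * S := by
    rw [hSdef, Finset.mul_sum]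
    apply Finset.sum_congr rfl
    intro i _
    congr 1
    rw [auxR_succ, ← Real.rpow_mul (h2pos i).le, hedef,
      show -((d:ℝ)-1)⁻¹ * ((d:ℝ)-1) = -1 by field_simp, Real.rpow_neg_one]
  have h1q0 : (0:ℝ) ≤ 1/q := by positivity
  have hA1q : 0 < A ^ (1/q) := Real.rpow_pos_of_pos hApos _
  have step2 : B * S < (A*S) ^ (1/q) := by
    have hSε : B / A ^ (1/q) < S ^ ε := by
      have hbase : (B / A ^ (1/q)) ^ ε⁻¹ < S := by
        have hTS := le_trans (le_max_right _ _) hNT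
        linarith
      calc B / A ^ (1/q) = ((B / A ^ (1/q)) ^ ε⁻¹) ^ ε :=
            (Real.rpow_inv_rpow (div_nonneg hBpos.le hA1q.le) hεpos.ne').symm
        _ < S ^ ε := Real.rpow_lt_rpow (Real.rpow_nonneg (div_nonneg hBpos.le hA1q.le) _)
            hbase hεpos
    have hB : B < A ^ (1/q) * S ^ ε := by
      rw [div_lt_iff₀ hA1q] at hSε
      exact hSε.trans_eq (mul_comm _ _)
    have hSS : S ^ ((1:ℝ)/q) = S ^ ε * S := by
      rw [show (1:ℝ)/q = ε + 1 by rw [hεdef]; ring, Real.rpow_add hS0, Real.rpow_one]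
    calc B * S < (A ^ (1/q) * S ^ ε) * S := mul_lt_mul_of_pos_right hB hS0
      _ = A ^ (1/q) * (S ^ ε * S) := by ring
      _ = A ^ (1/q) * S ^ ((1:ℝ)/q) := by rw [hSS]
      _ = (A*S) ^ ((1:ℝ)/q) := (Real.mul_rpow hApos.le hS0.le).symm
  unfold lorentzQuasinorm
  rw [hsum, show M * (((d:ℝ) * ω) * S) = B * S by rw [hBdef]; ring]
  exact lt_of_lt_of_le step2 (Real.rpow_le_rpow (mul_pos hApos hS0).le hkey h1q0)
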